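/- Let r ≥ 3 and k ≥ 2, set t = (r−1)(k−1)+1, and assume t divides n and that a Steiner system S(2,r,t) exists. Then there exists a linear r-uniform hypergraph H on an n-element vertex set with r·|E(H)| = n·(k−1) which contains no copy of any linear r-tree with k edges; concretely, H contains no k distinct hyperedges e_1, …, e_k whose union has exactly (r−1)·k+1 vertices and whose intersection graph is connected (i.e., for every nonempty proper subset S of {1,…,k} some e_i with i ∈ S intersects some e_j with j ∉ S). -/
import Mathlib


/-- If t = (r−1)(k−1)+1 divides n and a Steiner system S(2,r,t) exists,
then there is a linear r-uniform hypergraph H on n vertices with r·|E(H)| = n·(k−1)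
containing no copy of any linear r-tree with k edges. -/
theorem stmt_5 (r k n : ℕ) (hr : 3 ≤ r) (hk : 2 ≤ k)
    (t : ℕ) (ht : t = (r - 1) * (k - 1) + 1)
    (hdvd : t ∣ n)
    (hsteiner : ∃ E' : Finset (Finset (Fin t)),
      (∀ e ∈ E', e.card = r) ∧
      (∀ u v : Fin t, u ≠ v → ∃! e, e ∈ E' ∧ u ∈ e ∧ v ∈ e)) :
    ∃ E : Finset (Finset (Fin n)),
      (∀ e ∈ E, e.card = r) ∧
      (∀ e ∈ E, ∀ f ∈ E, e ≠ f → (e ∩ f).card ≤ 1) ∧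
      r * E.card = n * (k - 1) ∧
      ¬ ∃ e : Fin k → Finset (Fin n),
          (∀ i, e i ∈ E) ∧ Function.Injective e ∧
          (Finset.univ.biUnion e).card = (r - 1) * k + 1 ∧
          (∀ S : Finset (Fin k), S.Nonempty → S ≠ Finset.univ →
            ∃ i ∈ S, ∃ j ∉ S, ((e i) ∩ (e j)).Nonempty) := by
  obtain ⟨E', hEcard, huniq⟩ := hsteiner
  -- Steiner edges pairwise intersect in ≤ 1 vertex
  have hinter : ∀ e ∈ E', ∀ f ∈ E', e ≠ f → (e ∩ f).card ≤ 1 := by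
    intro e he f hf hef
    by_contra h
    push_neg at h
    obtain ⟨u, hu, v, hv, huv⟩ := Finset.one_lt_card.mp h
    simp only [Finset.mem_inter] at hu hv
    obtain ⟨w, -, hw⟩ := huniq u v huv
    have h1 := hw e ⟨he, hu.1, hv.1⟩
    have h2 := hw f ⟨hf, hu.2, hv.2⟩
    exact hef (h1.trans h2.symm)
  -- degree of each vertex is k-1
  have hdeg : ∀ u : Fin t, (E'.filter (fun e => u ∈ e)).card = k - 1 := by
    intro u
    set D := E'.filter (fun e => u ∈ e) with hD
    have hpair : (D : Set (Finset (Fin t))).PairwiseDisjoint (fun e => e.erase u) := by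
      intro a ha b hb hab
      simp only [hD, Finset.coe_filter, Set.mem_setOf_eq, Finset.mem_coe] at ha hb
      have hle : (a ∩ b).card ≤ 1 := hinter a ha.1 b hb.1 hab
      refine Finset.disjoint_left.mpr ?_
      intro x hxa hxb
      have hxa' := Finset.mem_erase.mp hxa
      have hxb' := Finset.mem_erase.mp hxb
      have hx : x ∈ a ∩ b := Finset.mem_inter.mpr ⟨hxa'.2, hxb'.2⟩
      have hu : u ∈ a ∩ b := Finset.mem_inter.mpr ⟨ha.2, hb.2⟩
      have : 1 < (a ∩ b).card := Finset.one_lt_card.mpr ⟨x, hx, u, hu, hxa'.1⟩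
      omega
    have hbi : D.biUnion (fun e => e.erase u) = Finset.univ.erase u := by
      ext v
      simp only [Finset.mem_biUnion, Finset.mem_erase, Finset.mem_univ, and_true, hD,
        Finset.mem_filter]
      constructor
      · rintro ⟨e, ⟨-, -⟩, hv, -⟩
        exact hv
      · intro hv
        obtain ⟨w, ⟨hwE, hw1, hw2⟩, -⟩ := huniq u v (Ne.symm hv)
        exact ⟨w, ⟨hwE, hw1⟩, hv, hw2⟩
    have hc1 : (D.biUnion (fun e => e.erase u)).card = ∑ e ∈ D, (e.erase u).card :=
      Finset.card_biUnion (fun a ha b hb hab => hpair ha hb hab)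
    have hc2 : ∀ e ∈ D, (e.erase u).card = r - 1 := by
      intro e he
      simp only [hD, Finset.mem_filter] at he
      rw [Finset.card_erase_of_mem he.2, hEcard e he.1]
    rw [hbi, Finset.card_erase_of_mem (Finset.mem_univ u), Finset.card_univ,
      Fintype.card_fin, Finset.sum_congr rfl hc2, Finset.sum_const, smul_eq_mul] at hc1
    have hrk : D.card * (r - 1) = (k - 1) * (r - 1) := by
      rw [← hc1, ht]; ring_nf; omega
    have : 0 < r - 1 := by omega
    exact Nat.eq_of_mul_eq_mul_right this hrk
  -- counting: r * |E'| = t * (k-1)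
  have hcount : r * E'.card = t * (k - 1) := by
    have h1 : ∑ e ∈ E', e.card = ∑ u : Fin t, (E'.filter (fun e => u ∈ e)).card := by
      have step : ∀ e ∈ E', e.card = ∑ u : Fin t, if u ∈ e then 1 else 0 := by
        intro e _; simp
      rw [Finset.sum_congr rfl step, Finset.sum_comm]
      exact Finset.sum_congr rfl fun u _ => by rw [Finset.card_filter]
    have h2 : ∑ e ∈ E', e.card = E'.card * r := by
      rw [Finset.sum_congr rfl hEcard, Finset.sum_const, smul_eq_mul]
    have h3 : ∑ u : Fin t, (E'.filter (fun e => u ∈ e)).card = t * (k - 1) := by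
      simp [hdeg, Finset.sum_const]
    rw [mul_comm, ← h2, h1, h3]
  -- construction: q disjoint copies of the Steiner system
  have hn : t * (n / t) = n := Nat.mul_div_cancel' hdvd
  set q := n / t with hq
  have hqt : q * t = n := by rw [mul_comm]; exact hn
  let φ : Fin q × Fin t ≃ Fin n := finProdFinEquiv.trans (finCongr hqt)
  let F : Fin q → Finset (Fin t) → Finset (Fin n) := fun j s => s.image (fun u => φ (j, u))
  have hφinj : ∀ j : Fin q, Function.Injective (fun u : Fin t => φ (j, u)) := by
    intro j u v h
    have := φ.injective h
    exact (Prod.ext_iff.mp this).2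
  have hFcard : ∀ j s, (F j s).card = s.card := fun j s =>
    Finset.card_image_of_injective s (hφinj j)
  have hFdisj : ∀ j j' : Fin q, j ≠ j' → ∀ s s', Disjoint (F j s) (F j' s') := by
    intro j j' hjj s s'
    refine Finset.disjoint_left.mpr ?_
    intro x hx hx'
    simp only [F, Finset.mem_image] at hx hx'
    obtain ⟨u, -, hu⟩ := hx
    obtain ⟨v, -, hv⟩ := hx'
    exact hjj (Prod.ext_iff.mp (φ.injective (hu.trans hv.symm))).1
  have hFinj2 : ∀ j, Function.Injective (F j) := fun j =>
    Finset.image_injective (hφinj j)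
  have hFeq : ∀ (j j' : Fin q) (s s' : Finset (Fin t)), s.Nonempty → F j s = F j' s' → j = j' := by
    rintro j j' s s' ⟨u, hu⟩ h
    by_contra hjj
    have hx : φ (j, u) ∈ F j s := Finset.mem_image_of_mem _ hu
    have hx' : φ (j, u) ∈ F j' s' := h ▸ hx
    exact Finset.disjoint_left.mp (hFdisj j j' hjj s s') hx hx'
  have hnonempty : ∀ e ∈ E', e.Nonempty := fun e he =>
    Finset.card_pos.mp (by rw [hEcard e he]; omega)
  set E : Finset (Finset (Fin n)) :=
    Finset.univ.biUnion (fun j : Fin q => E'.image (F j)) with hE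
  have hmem : ∀ f, f ∈ E ↔ ∃ j, ∃ e ∈ E', F j e = f := by
    intro f
    simp [hE, Finset.mem_biUnion, Finset.mem_image]
  refine ⟨E, ?_, ?_, ?_, ?_⟩
  · intro f hf
    obtain ⟨j, e, he, rfl⟩ := (hmem f).mp hf
    rw [hFcard, hEcard e he]
  · intro f hf g hg hfg
    obtain ⟨j, e, he, rfl⟩ := (hmem f).mp hf
    obtain ⟨j', e', he', rfl⟩ := (hmem g).mp hg
    by_cases hjj : j = j'
    · subst hjj
      have hee : e ≠ e' := fun h => hfg (by rw [h])
      have him : F j e ∩ F j e' = F j (e ∩ e') :=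
        (Finset.image_inter _ _ (hφinj j)).symm
      rw [him, hFcard]
      exact hinter e he e' he' hee
    · rw [Finset.disjoint_iff_inter_eq_empty.mp (hFdisj j j' hjj e e')]
      simp
  · have himgdisj : ∀ a ∈ (Finset.univ : Finset (Fin q)), ∀ b ∈ Finset.univ, a ≠ b →
        Disjoint (E'.image (F a)) (E'.image (F b)) := by
      intro a _ b _ hab
      refine Finset.disjoint_left.mpr ?_
      intro f hf hf'
      obtain ⟨e, he, rfl⟩ := Finset.mem_image.mp hf
      obtain ⟨e', he', heq⟩ := Finset.mem_image.mp hf'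
      exact hab (hFeq a b e e' (hnonempty e he) heq.symm)
    have hEc : E.card = ∑ j : Fin q, (E'.image (F j)).card :=
      Finset.card_biUnion himgdisj
    have hEc' : E.card = q * E'.card := by
      rw [hEc, Finset.sum_congr rfl
        (fun j _ => Finset.card_image_of_injective E' (hFinj2 j)),
        Finset.sum_const, smul_eq_mul, Finset.card_univ, Fintype.card_fin]
    rw [hEc', show r * (q * E'.card) = q * (r * E'.card) from by ring, hcount, ← hn]
    ring
  · rintro ⟨e, heE, hinjE, hcardU, hconn⟩
    choose j s hs hFs using fun i => (hmem (e i)).mp (heE i)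
    have hk0 : 0 < k := by omega
    let i0 : Fin k := ⟨0, hk0⟩
    set S := Finset.univ.filter (fun i => j i = j i0) with hS
    have hSne : S.Nonempty := ⟨i0, by simp [hS]⟩
    have hSuniv : S = Finset.univ := by
      by_contra hne
      obtain ⟨a, ha, b, hb, hab⟩ := hconn S hSne hne
      simp only [hS, Finset.mem_filter, Finset.mem_univ, true_and] at ha hb
      have hjab : j a ≠ j b := by rw [ha]; exact fun h => hb h.symm
      have hd := hFdisj (j a) (j b) hjab (s a) (s b)
      rw [hFs a, hFs b] at hd
      obtain ⟨x, hx⟩ := hab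
      exact Finset.disjoint_left.mp hd (Finset.mem_inter.mp hx).1 (Finset.mem_inter.mp hx).2
    have hall : ∀ i, j i = j i0 := by
      intro i
      have hi : i ∈ S := hSuniv.symm ▸ Finset.mem_univ i
      rw [hS, Finset.mem_filter] at hi
      exact hi.2
    have hsub : Finset.univ.biUnion e ⊆
        Finset.univ.image (fun u : Fin t => φ (j i0, u)) := by
      intro x hx
      obtain ⟨i, -, hxi⟩ := Finset.mem_biUnion.mp hx
      rw [← hFs i] at hxi
      simp only [F, Finset.mem_image] at hxi
      obtain ⟨u, -, hu⟩ := hxi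
      rw [hall i] at hu
      exact Finset.mem_image.mpr ⟨u, Finset.mem_univ u, hu⟩
    have hVcard : (Finset.univ.image (fun u : Fin t => φ (j i0, u))).card = t := by
      rw [Finset.card_image_of_injective _ (hφinj _), Finset.card_univ, Fintype.card_fin]
    have hle : (Finset.univ.biUnion e).card ≤ t := hVcard ▸ Finset.card_le_card hsub
    rw [hcardU] at hle
    have hkk : (r - 1) * k = (r - 1) * (k - 1) + (r - 1) := by
      have hkeq : k = (k - 1) + 1 := by omega
      conv_lhs => rw [hkeq]
      ring
    omega
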